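/- Let σ̂² > 0, P > 0, Γ = P/σ̂², Q(x) = N(x;P), Ŵ(y|x) = N(y−x;σ̂²), and for s > 0 and ρ ∈ (0,1] with sρ < 1 define ε_{s,ρ}(x,y) = ( ∫ Q(x') Ŵ(y|x')^s dx' / Ŵ(y|x)^s )^ρ. Then the double integral ∬_{ℝ²} Q(x) Ŵ(y|x) ε_{s,ρ}(x,y) dx dy is finite and −log ∬_{ℝ²} Q(x) Ŵ(y|x) ε_{s,ρ}(x,y) dx dy = (ρ/2) log(1 + Γ s) + (1/2) log( 1 + ρΓ(1 − s − ρs) / ( Γ + s^{−1} ) ). -/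

import Mathlib

open Real Filter MeasureTheory

/-- Centered Gaussian density with variance `v`: `N(z; v)`. -/
noncomputable def gauss (z v : ℝ) : ℝ :=
  (Real.sqrt (2 * Real.pi * v))⁻¹ * Real.exp (-(z ^ 2) / (2 * v))

/-- Mismatched exponent density for Gaussian input `N(x;P)` and
nearest-neighbor metric `N(y−x;σ̂²)`. -/
noncomputable def epsGauss (σ2 P s ρ x y : ℝ) : ℝ :=
  ((∫ x', gauss x' P * gauss (y - x') σ2 ^ s) / gauss (y - x) σ2 ^ s) ^ ρ

lemma gauss_int (b c d : ℝ) (hb : 0 < b) :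
    ∫ x : ℝ, Real.exp (-(b*x^2 + c*x + d)) = Real.sqrt (π/b) * Real.exp (c^2/(4*b) - d) := by
  have key : ∀ x : ℝ, -(b*x^2 + c*x + d) = -b*(x + c/(2*b))^2 + (c^2/(4*b) - d) := by
    intro x; field_simp; ring
  simp_rw [key, Real.exp_add, integral_mul_const]
  rw [integral_add_right_eq_self (fun x : ℝ => Real.exp (-b*x^2)) (c/(2*b)), integral_gaussian]

lemma gauss_integrable (b c d : ℝ) (hb : 0 < b) :
    Integrable (fun x : ℝ => Real.exp (-(b*x^2 + c*x + d))) := by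
  have key : ∀ x : ℝ, -(b*x^2 + c*x + d) = -b*(x + c/(2*b))^2 + (c^2/(4*b) - d) := by
    intro x; field_simp; ring
  simp_rw [key, Real.exp_add]
  exact ((integrable_exp_neg_mul_sq hb).comp_add_right (c/(2*b))).mul_const _

lemma gauss_rpow (z v s : ℝ) :
    gauss z v ^ s = ((Real.sqrt (2 * π * v))⁻¹) ^ s * Real.exp (-(z ^ 2) / (2 * v) * s) := by
  rw [gauss, Real.mul_rpow (by positivity) (le_of_lt (Real.exp_pos _)), Real.exp_mul]

lemma inner_int (σ2 P s : ℝ) (hσ : 0 < σ2) (hP : 0 < P) (hs : 0 < s) (y : ℝ) :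
    (∫ x', gauss x' P * gauss (y - x') σ2 ^ s)
      = (Real.sqrt (2*π*P))⁻¹ * ((Real.sqrt (2*π*σ2))⁻¹) ^ s
        * (Real.sqrt (π / ((2*P)⁻¹ + s/(2*σ2))) * Real.exp (-(s/(2*(σ2+s*P))) * y^2)) := by
  have ha : 0 < (2*P)⁻¹ + s/(2*σ2) := by positivity
  have key : ∀ x' : ℝ, gauss x' P * gauss (y - x') σ2 ^ s
      = ((Real.sqrt (2*π*P))⁻¹ * ((Real.sqrt (2*π*σ2))⁻¹) ^ s)
        * Real.exp (-(((2*P)⁻¹ + s/(2*σ2))*x'^2 + (-(s/σ2)*y)*x' + (s/(2*σ2))*y^2)) := by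
    intro x'
    rw [gauss, gauss_rpow]
    rw [mul_mul_mul_comm, ← Real.exp_add]
    congr 1
    field_simp
    ring
  simp_rw [key, integral_const_mul, gauss_int _ _ _ ha]
  congr 2
  · congr 1
    field_simp
    ring

lemma eps_eq (σ2 P s ρ : ℝ) (hσ : 0 < σ2) (hP : 0 < P) (hs : 0 < s) (x y : ℝ) :
    epsGauss σ2 P s ρ x y
      = ((Real.sqrt (2*π*P))⁻¹ * Real.sqrt (π / ((2*P)⁻¹ + s/(2*σ2)))) ^ ρ
        * Real.exp (ρ * ((s/(2*σ2))*(y-x)^2 - (s/(2*(σ2+s*P)))*y^2)) := by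
  have hB : (0:ℝ) < (Real.sqrt (2*π*σ2))⁻¹ ^ s := by positivity
  rw [epsGauss, inner_int σ2 P s hσ hP hs y, gauss_rpow]
  rw [show (Real.sqrt (2*π*P))⁻¹ * (Real.sqrt (2*π*σ2))⁻¹ ^ s
        * (Real.sqrt (π / ((2*P)⁻¹ + s/(2*σ2))) * Real.exp (-(s/(2*(σ2+s*P))) * y^2))
        / ((Real.sqrt (2*π*σ2))⁻¹ ^ s * Real.exp (-((y-x) ^ 2) / (2 * σ2) * s))
      = ((Real.sqrt (2*π*P))⁻¹ * Real.sqrt (π / ((2*P)⁻¹ + s/(2*σ2))))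
        * Real.exp ((-(s/(2*(σ2+s*P))) * y^2) - (-((y-x) ^ 2) / (2 * σ2) * s)) from by
    rw [Real.exp_sub]; field_simp]
  rw [Real.mul_rpow (by positivity) (le_of_lt (Real.exp_pos _)), ← Real.exp_mul]
  congr 2
  ring

lemma integrand_eq (σ2 P s ρ : ℝ) (hσ : 0 < σ2) (hP : 0 < P) (hs : 0 < s) (x y : ℝ) :
    gauss x P * gauss (y - x) σ2 * epsGauss σ2 P s ρ x y
      = ((Real.sqrt (2*π*P))⁻¹ * (Real.sqrt (2*π*σ2))⁻¹
          * ((Real.sqrt (2*π*P))⁻¹ * Real.sqrt (π / ((2*P)⁻¹ + s/(2*σ2)))) ^ ρ)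
        * Real.exp (-((2*P)⁻¹ * x^2 + ((1-s*ρ)/(2*σ2)) * (y-x)^2
            + (ρ*s/(2*(σ2+s*P))) * y^2)) := by
  rw [gauss, gauss, eps_eq σ2 P s ρ hσ hP hs x y]
  rw [show ((Real.sqrt (2*π*P))⁻¹ * Real.exp (-(x ^ 2) / (2 * P)))
        * ((Real.sqrt (2*π*σ2))⁻¹ * Real.exp (-((y-x) ^ 2) / (2 * σ2)))
        * (((Real.sqrt (2*π*P))⁻¹ * Real.sqrt (π / ((2*P)⁻¹ + s/(2*σ2)))) ^ ρ
            * Real.exp (ρ * ((s/(2*σ2))*(y-x)^2 - (s/(2*(σ2+s*P)))*y^2)))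
      = ((Real.sqrt (2*π*P))⁻¹ * (Real.sqrt (2*π*σ2))⁻¹
          * ((Real.sqrt (2*π*P))⁻¹ * Real.sqrt (π / ((2*P)⁻¹ + s/(2*σ2)))) ^ ρ)
        * (Real.exp (-(x ^ 2) / (2 * P)) * Real.exp (-((y-x) ^ 2) / (2 * σ2))
            * Real.exp (ρ * ((s/(2*σ2))*(y-x)^2 - (s/(2*(σ2+s*P)))*y^2))) from by ring]
  rw [← Real.exp_add, ← Real.exp_add]
  congr 2
  field_simp
  ring

/-- Closed form of the Gallager `E^ML` term for Gaussian codebooks with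
nearest-neighbor decoding, where `Γ = P/σ̂²`. -/
theorem stmt17 (σ2 P s ρ : ℝ) (hσ : 0 < σ2) (hP : 0 < P) (hs : 0 < s)
    (hρ0 : 0 < ρ) (hρ1 : ρ ≤ 1) (hsρ : s * ρ < 1) :
    Integrable (fun q : ℝ × ℝ => gauss q.1 P * gauss (q.2 - q.1) σ2 * epsGauss σ2 P s ρ q.1 q.2) ∧
    -Real.log (∫ q : ℝ × ℝ, gauss q.1 P * gauss (q.2 - q.1) σ2 * epsGauss σ2 P s ρ q.1 q.2)
      = (ρ / 2) * Real.log (1 + (P / σ2) * s)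
        + (1 / 2) * Real.log (1 + ρ * (P / σ2) * (1 - s - ρ * s) / ((P / σ2) + s⁻¹)) := by
  have hπ := Real.pi_pos
  have ht : (0:ℝ) < σ2 + s*P := by positivity
  have h1sρ : (0:ℝ) < 1 - s*ρ := by linarith
  set aa : ℝ := (2*P)⁻¹ with haa_def
  set bb : ℝ := (1-s*ρ)/(2*σ2) with hbb_def
  set cc : ℝ := ρ*s/(2*(σ2+s*P)) with hcc_def
  have haa : 0 < aa := by positivity
  have hbb : 0 < bb := div_pos h1sρ (by positivity)
  have hcc : 0 < cc := by rw [hcc_def]; positivity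
  set ee : ℝ := (aa*bb+aa*cc+bb*cc)/(bb+cc) with hee_def
  have hee : 0 < ee := div_pos (by positivity) (by positivity)
  set A : ℝ := Real.sqrt (2*π*P) with hA_def
  set B : ℝ := Real.sqrt (2*π*σ2) with hB_def
  set S : ℝ := Real.sqrt (π / ((2*P)⁻¹ + s/(2*σ2))) with hS_def
  have hA : 0 < A := Real.sqrt_pos.mpr (by positivity)
  have hB : 0 < B := Real.sqrt_pos.mpr (by positivity)
  have hS : 0 < S := Real.sqrt_pos.mpr (by positivity)
  set C : ℝ := A⁻¹ * B⁻¹ * (A⁻¹ * S) ^ ρ with hC_def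
  have hC : 0 < C := by rw [hC_def]; positivity
  have hfun : (fun q : ℝ × ℝ => gauss q.1 P * gauss (q.2 - q.1) σ2 * epsGauss σ2 P s ρ q.1 q.2)
      = fun q : ℝ × ℝ => C * Real.exp (-(aa*q.1^2 + bb*(q.2-q.1)^2 + cc*q.2^2)) := by
    funext q
    exact integrand_eq σ2 P s ρ hσ hP hs q.1 q.2
  -- integrability
  have hmeas : AEStronglyMeasurable
      (fun q : ℝ × ℝ => Real.exp (-(aa*q.1^2 + bb*(q.2-q.1)^2 + cc*q.2^2))) volume := by
    apply Continuous.aestronglyMeasurable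
    fun_prop
  have hdom : Integrable (fun q : ℝ × ℝ => Real.exp (-aa*q.1^2) * Real.exp (-cc*q.2^2)) := by
    rw [Measure.volume_eq_prod ℝ ℝ]
    exact (integrable_exp_neg_mul_sq haa).mul_prod (integrable_exp_neg_mul_sq hcc)
  have hInt0 : Integrable
      (fun q : ℝ × ℝ => Real.exp (-(aa*q.1^2 + bb*(q.2-q.1)^2 + cc*q.2^2))) := by
    apply hdom.mono' hmeas
    filter_upwards with q
    rw [Real.norm_eq_abs, Real.abs_exp, ← Real.exp_add]
    apply Real.exp_le_exp.mpr
    nlinarith [mul_nonneg hbb.le (sq_nonneg (q.2 - q.1))]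
  have hInt : Integrable
      (fun q : ℝ × ℝ => gauss q.1 P * gauss (q.2 - q.1) σ2 * epsGauss σ2 P s ρ q.1 q.2) := by
    rw [hfun]
    exact hInt0.const_mul C
  refine ⟨hInt, ?_⟩
  -- compute the integral
  have hinner : ∀ x : ℝ, (∫ y : ℝ, Real.exp (-(aa*x^2 + bb*(y-x)^2 + cc*y^2)))
      = Real.sqrt (π/(bb+cc)) * Real.exp (-(ee*x^2 + 0*x + 0)) := by
    intro x
    have h1 : ∀ y : ℝ, -(aa*x^2 + bb*(y-x)^2 + cc*y^2)
        = -((bb+cc)*y^2 + (-(2*bb*x))*y + (aa+bb)*x^2) := fun y => by ring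
    simp_rw [h1]
    rw [gauss_int _ _ _ (by positivity)]
    congr 1
    rw [hee_def]
    field_simp
    congr 1; field_simp; ring
  have hI : (∫ q : ℝ × ℝ, gauss q.1 P * gauss (q.2 - q.1) σ2 * epsGauss σ2 P s ρ q.1 q.2)
      = C * (Real.sqrt (π/(bb+cc)) * Real.sqrt (π/ee)) := by
    rw [hfun, MeasureTheory.integral_const_mul, Measure.volume_eq_prod ℝ ℝ,
      MeasureTheory.integral_prod _ (by exact hInt0)]
    simp only
    rw [show (∫ x : ℝ, ∫ y : ℝ, Real.exp (-(aa*x^2 + bb*(y-x)^2 + cc*y^2)))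
        = ∫ x : ℝ, Real.sqrt (π/(bb+cc)) * Real.exp (-(ee*x^2 + 0*x + 0)) from by
      congr 1; funext x; exact hinner x]
    rw [MeasureTheory.integral_const_mul, gauss_int _ _ _ hee]
    norm_num
  rw [hI]
  -- logarithms
  have hAS : A⁻¹ * S = Real.sqrt (σ2/(σ2+s*P)) := by
    rw [hA_def, hS_def, ← Real.sqrt_inv, ← Real.sqrt_mul (by positivity)]
    congr 1
    field_simp
  have hX : (0:ℝ) < Real.sqrt (π/(bb+cc)) := Real.sqrt_pos.mpr (by positivity)
  have hY : (0:ℝ) < Real.sqrt (π/ee) := Real.sqrt_pos.mpr (by positivity)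
  have hlogC : Real.log C = -(Real.log (2*π*P) / 2) - Real.log (2*π*σ2) / 2
      + ρ * ((Real.log σ2 - Real.log (σ2+s*P)) / 2) := by
    rw [hC_def, Real.log_mul (by positivity) (by positivity),
      Real.log_mul (by positivity) (by positivity), hAS,
      Real.log_rpow (Real.sqrt_pos.mpr (by positivity)),
      Real.log_sqrt (by positivity), Real.log_inv, Real.log_inv,
      hA_def, hB_def, Real.log_sqrt (by positivity), Real.log_sqrt (by positivity),
      Real.log_div (ne_of_gt hσ) (ne_of_gt ht)]
    ring
  have hR1 : 1 + (P/σ2)*s = (σ2+s*P)/σ2 := by field_simp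
  have hR2 : 1 + ρ*(P/σ2)*(1-s-ρ*s)/((P/σ2)+s⁻¹)
      = (2*π*P)*(2*π*σ2) / ((π/(bb+cc)) * (π/ee)) := by
    rw [hee_def, haa_def, hbb_def, hcc_def]
    have hden : (0:ℝ) < P/σ2 + s⁻¹ := by positivity
    have hne : (1 - ρ * s) * (σ2 + P * s) + ρ * σ2 * s ≠ 0 := by
      have : 0 < 1 - ρ * s := by linarith
      positivity
    field_simp
    ring
  rw [Real.log_mul (ne_of_gt hC) (by positivity),
    Real.log_mul (ne_of_gt hX) (ne_of_gt hY), hlogC,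
    Real.log_sqrt (by positivity), Real.log_sqrt (by positivity),
    hR1, hR2, Real.log_div (ne_of_gt ht) (ne_of_gt hσ),
    show Real.log (2*π*P*(2*π*σ2) / (π/(bb+cc)*(π/ee)))
        = Real.log (2*π*P) + Real.log (2*π*σ2)
          - (Real.log (π/(bb+cc)) + Real.log (π/ee)) from by
      rw [Real.log_div (by positivity) (by positivity),
        Real.log_mul (ne_of_gt (by positivity : (0:ℝ) < 2*π*P)) (by positivity),
        Real.log_mul (ne_of_gt (by positivity : (0:ℝ) < π/(bb+cc))) (by positivity)]]
  ring
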